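/- For every Ψ = (φ,ψ) ∈ W and every δ > 0, Re b(Ψ, TΨ) ≥ (γ − 1/δ)‖φ‖²_{L²} + (1 − δ)‖ψ‖²_{L²}. In particular, for any δ ∈ (1/γ, 1), b is T-coercive on W × W: Re b(Ψ, TΨ) ≥ min{γ − 1/δ, 1 − δ}·‖Ψ‖²_W. -/

import Mathlib

noncomputable section

/-- The sesquilinear form `b(U,Ψ) = (n w, φ) − (v, ψ)` on `W = L²(Ω) × L²(Ω)`,
where `U = (w,v)`, `Ψ = (φ,ψ)`, the multiplication by the index of refraction `n` is
the bounded operator `nop` on `L²(Ω)`, and `(f,g) = ∫ f ḡ` is the `L²` inner product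
(linear in `f`, conjugate-linear in `g`). -/
def bFormW {L2 : Type*} [NormedAddCommGroup L2] [InnerProductSpace ℂ L2]
    (nop : L2 →L[ℂ] L2) (U Ψ : L2 × L2) : ℂ :=
  (inner ℂ Ψ.1 (nop U.1) : ℂ) - (inner ℂ Ψ.2 U.2 : ℂ)

/-- **T-coercivity of the form `b` on `W × W`** with `T(φ,ψ) = (φ, 2φ − ψ)`:
for every `Ψ = (φ,ψ) ∈ W` and every `δ > 0`,
`Re b(Ψ, TΨ) ≥ (γ − 1/δ) ‖φ‖² + (1 − δ) ‖ψ‖²`; in particular for `δ ∈ (1/γ, 1)`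
one has `Re b(Ψ, TΨ) ≥ min (γ − 1/δ) (1 − δ) · ‖Ψ‖²_W` with
`min (γ − 1/δ) (1 − δ) > 0`, where `‖Ψ‖²_W = ‖φ‖² + ‖ψ‖²`. -/
theorem bForm_tcoercive
    {L2 : Type*} [NormedAddCommGroup L2] [InnerProductSpace ℂ L2] [CompleteSpace L2]
    (nop : L2 →L[ℂ] L2) (γ : ℝ) (hγ : 1 < γ)
    (hsym : ∀ f g : L2, (inner ℂ (nop f) g : ℂ) = (inner ℂ f (nop g) : ℂ))
    (hn : ∀ f : L2, γ * ‖f‖ ^ 2 ≤ (inner ℂ f (nop f) : ℂ).re) :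
    ∀ φ ψ : L2,
      (∀ δ : ℝ, 0 < δ →
        (γ - 1 / δ) * ‖φ‖ ^ 2 + (1 - δ) * ‖ψ‖ ^ 2
          ≤ (bFormW nop (φ, ψ) (φ, (2 : ℂ) • φ - ψ)).re) ∧
      (∀ δ : ℝ, 1 / γ < δ → δ < 1 →
        0 < min (γ - 1 / δ) (1 - δ) ∧
        min (γ - 1 / δ) (1 - δ) * (‖φ‖ ^ 2 + ‖ψ‖ ^ 2)
          ≤ (bFormW nop (φ, ψ) (φ, (2 : ℂ) • φ - ψ)).re) := by
  intro φ ψ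
  have key : (bFormW nop (φ, ψ) (φ, (2 : ℂ) • φ - ψ)).re
      = (inner ℂ φ (nop φ) : ℂ).re - 2 * (inner ℂ φ ψ : ℂ).re + ‖ψ‖ ^ 2 := by
    have h2 : (inner ℂ ψ ψ : ℂ).re = ‖ψ‖ ^ 2 := by
      simpa using inner_self_eq_norm_sq (𝕜 := ℂ) ψ
    simp [bFormW, inner_sub_left, inner_smul_left, Complex.mul_re, h2]
    simp only [← Complex.ofReal_pow, Complex.ofReal_re]
    ring
  have hcs : (inner ℂ φ ψ : ℂ).re ≤ ‖φ‖ * ‖ψ‖ := by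
    simpa using re_inner_le_norm (𝕜 := ℂ) φ ψ
  have hmain : ∀ δ : ℝ, 0 < δ →
      (γ - 1 / δ) * ‖φ‖ ^ 2 + (1 - δ) * ‖ψ‖ ^ 2
        ≤ (bFormW nop (φ, ψ) (φ, (2 : ℂ) • φ - ψ)).re := by
    intro δ hδ
    rw [key]
    have h1 : (1 / δ) * δ = 1 := by field_simp
    nlinarith [hn φ, sq_nonneg (‖φ‖ - δ * ‖ψ‖), mul_pos hδ hδ,
      one_div_pos.mpr hδ, norm_nonneg φ, norm_nonneg ψ, sq_nonneg (‖ψ‖)]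
  refine ⟨hmain, ?_⟩
  intro δ h1 h2
  have hδ : 0 < δ := lt_trans (by positivity) h1
  have hγd : 1 / δ < γ := by
    rw [div_lt_iff₀ hδ]
    have := (div_lt_iff₀ (by linarith : (0:ℝ) < γ)).mp h1
    nlinarith
  have hpos : 0 < min (γ - 1 / δ) (1 - δ) := by
    apply lt_min <;> linarith
  refine ⟨hpos, ?_⟩
  calc min (γ - 1 / δ) (1 - δ) * (‖φ‖ ^ 2 + ‖ψ‖ ^ 2)
      ≤ (γ - 1 / δ) * ‖φ‖ ^ 2 + (1 - δ) * ‖ψ‖ ^ 2 := by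
        have := min_le_left (γ - 1 / δ) (1 - δ)
        have := min_le_right (γ - 1 / δ) (1 - δ)
        nlinarith [sq_nonneg ‖φ‖, sq_nonneg ‖ψ‖]
    _ ≤ _ := hmain δ hδ
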